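/- Let G be a finite group of order 2n with n odd in which every element of even order is an involution. Then the number of Sylow 2-subgroups of G equals n, and |f₂(G)| = n + 1. -/

import Mathlib

/-- If `|G| = 2n` with `n` odd and every element of even order is an involution, then `G`
has exactly `n` Sylow 2-subgroups and `|f₂(G)| = n + 1`. -/
theorem sylow_two_count_of_involutions (G : Type*) [Group G] [Fintype G]
    (n : ℕ) (hn : Odd n) (hcard : Fintype.card G = 2 * n)
    (hinv : ∀ g : G, Even (orderOf g) → orderOf g = 2) :
    Nat.card (Sylow 2 G) = n ∧ Nat.card {g : G // g ^ 2 = 1} = n + 1 := by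
  classical
  have hp : Fact (Nat.Prime 2) := ⟨Nat.prime_two⟩
  have hn0 : n ≠ 0 := by rintro rfl; simp at hn
  have h2n : ¬ (2 ∣ n) := Nat.two_dvd_ne_zero.mpr (Nat.odd_iff.mp hn)
  have hcard' : Nat.card G = 2 * n := by rw [Nat.card_eq_fintype_card, hcard]
  have hfact : (Nat.card G).factorization 2 = 1 := by
    rw [hcard', Nat.factorization_mul two_ne_zero hn0]
    simp [Nat.Prime.factorization_self Nat.prime_two,
      Nat.factorization_eq_zero_of_not_dvd h2n]
  -- elements of zpowers of an involution
  have hzp : ∀ t : G, orderOf t = 2 → ∀ x ∈ Subgroup.zpowers t, x = 1 ∨ x = t := by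
    intro t ht x hx
    obtain ⟨k, rfl⟩ := Subgroup.mem_zpowers_iff.mp hx
    have ht2 : t ^ (2 : ℤ) = 1 := by
      have := pow_orderOf_eq_one t
      rw [ht] at this
      exact_mod_cast this
    rcases Int.even_or_odd k with ⟨m, rfl⟩ | ⟨m, rfl⟩
    · left
      rw [show m + m = 2 * m by ring, zpow_mul, ht2, one_zpow]
    · right
      rw [show 2 * m + 1 = 2 * m + 1 by ring, zpow_add, zpow_mul, ht2, one_zpow, one_mul, zpow_one]
  have hzpcard : ∀ t : G, orderOf t = 2 → Nat.card (Subgroup.zpowers t) = 2 := by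
    intro t ht; rw [Nat.card_zpowers, ht]
  -- centralizer of an involution equals its zpowers
  have hcent : ∀ t : G, orderOf t = 2 →
      Subgroup.centralizer {t} = Subgroup.zpowers t := by
    intro t ht
    have ht1 : t ≠ 1 := by intro h; rw [h, orderOf_one] at ht; omega
    set C := Subgroup.centralizer ({t} : Set G) with hC
    have hCp : IsPGroup 2 C := by
      intro g
      refine ⟨1, ?_⟩
      have hcomm : Commute t (g : G) := (Subgroup.mem_centralizer_iff.mp g.2 t rfl)
      have hg2 : (g : G) ^ 2 = 1 := by
        rcases Nat.even_or_odd (orderOf (g : G)) with he | ho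
        · have := hinv _ he
          rw [← this]; exact pow_orderOf_eq_one _
        · have hcop : Nat.Coprime (orderOf (g:G)) (orderOf t) := by
            rw [ht]; exact ho.coprime_two_right
          have := (Commute.orderOf_mul_eq_mul_orderOf_of_coprime hcomm.symm hcop)
          have heven : Even (orderOf ((g:G) * t)) := by
            rw [this, ht]; exact ⟨orderOf (g:G), by ring⟩
          have h2 := hinv _ heven
          rw [this, ht] at h2
          have : orderOf (g : G) = 1 := by omega
          have : (g : G) = 1 := orderOf_eq_one_iff.mp this
          rw [this]; simp
      have : (g : C) ^ 2 = 1 := by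
        ext; push_cast; exact hg2
      simpa using this
    obtain ⟨k, hk⟩ := hCp.exists_card_eq
    have hdvd : Nat.card C ∣ 2 * n := hcard' ▸ Subgroup.card_subgroup_dvd_card C
    have hk1 : k ≤ 1 := by
      by_contra h
      have h4 : 2 ^ 2 ∣ 2 ^ k := pow_dvd_pow 2 (by omega)
      have : (4 : ℕ) ∣ 2 * n := by
        calc (4:ℕ) = 2^2 := by norm_num
        _ ∣ 2^k := h4
        _ ∣ 2 * n := hk ▸ hdvd
      omega
    have hle : Subgroup.zpowers t ≤ C := by
      rw [hC]
      rintro x hx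
      rw [Subgroup.mem_centralizer_iff]
      rintro y hy
      rw [Set.mem_singleton_iff] at hy
      rw [hy]
      rcases hzp t ht x hx with rfl | rfl
      · simp
      · rfl
    refine (Subgroup.eq_of_le_of_card_ge hle ?_).symm
    rw [hzpcard t ht, hk]
    calc 2 ^ k ≤ 2 ^ 1 := Nat.pow_le_pow_right (by norm_num) hk1
    _ = 2 := by norm_num
  -- every Sylow 2-subgroup has card 2 and equals zpowers of an involution
  have hPcard : ∀ P : Sylow 2 G, Nat.card (P : Subgroup G) = 2 := by
    intro P
    rw [Sylow.card_eq_multiplicity, hfact, pow_one]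
  have hPinv : ∀ P : Sylow 2 G, ∃ t : G, orderOf t = 2 ∧ (P : Subgroup G) = Subgroup.zpowers t := by
    intro P
    have h2 := hPcard P
    have : Nat.card (P : Subgroup G) ≠ 1 := by omega
    have hne : (P : Subgroup G) ≠ ⊥ := by
      intro h; rw [h, Subgroup.card_bot] at this; exact this rfl
    obtain ⟨t, htP, ht1⟩ := ((P : Subgroup G).bot_or_exists_ne_one).resolve_left hne
    have htord : orderOf t = 2 := by
      have hdvd : orderOf t ∣ 2 := by
        have := Subgroup.orderOf_dvd_natCard (P : Subgroup G) htP
        rwa [h2] at this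
      rcases (Nat.dvd_prime Nat.prime_two).mp hdvd with h | h
      · exact absurd (orderOf_eq_one_iff.mp h) ht1
      · exact h
    refine ⟨t, htord, ?_⟩
    refine (Subgroup.eq_of_le_of_card_ge ?_ ?_).symm
    · rwa [Subgroup.zpowers_le]
    · rw [h2, hzpcard t htord]
  -- normalizer of a Sylow 2-subgroup is itself
  have hnorm : ∀ P : Sylow 2 G, Subgroup.normalizer ((P : Subgroup G) : Set G) = P := by
    intro P
    obtain ⟨t, ht, hPz⟩ := hPinv P
    have ht1 : t ≠ 1 := by intro h; rw [h, orderOf_one] at ht; omega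
    refine le_antisymm ?_ Subgroup.le_normalizer
    rw [hPz]
    intro g hg
    rw [← hcent t ht, Subgroup.mem_centralizer_iff]
    rintro y hy
    rw [Set.mem_singleton_iff] at hy
    rw [hy]
    have hgt : g * t * g⁻¹ ∈ Subgroup.zpowers t :=
      (Subgroup.mem_normalizer_iff.mp hg t).mp (Subgroup.mem_zpowers t)
    rcases hzp t ht _ hgt with h | h
    · exfalso
      apply ht1
      have := congrArg (fun x => g⁻¹ * x * g) h
      simpa [mul_assoc] using this
    · exact (mul_inv_eq_iff_eq_mul.mp h).symm
  -- the Sylow count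
  obtain ⟨P⟩ := (inferInstance : Nonempty (Sylow 2 G))
  have hsyl : Nat.card (Sylow 2 G) = n := by
    rw [Sylow.card_eq_index_normalizer P]
    show (Subgroup.normalizer ((P : Subgroup G) : Set G)).index = n
    rw [hnorm P]
    have h1 := Subgroup.card_mul_index (P : Subgroup G)
    rw [hPcard P, hcard'] at h1
    omega
  -- involutions are in bijection with Sylow 2-subgroups
  have hinvcount : Nat.card {g : G // orderOf g = 2} = n := by
    rw [← hsyl]
    apply Nat.card_eq_of_bijective
      (fun t => Sylow.ofCard (Subgroup.zpowers t.1)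
        (by rw [Nat.card_zpowers, t.2, hfact, pow_one]))
    constructor
    · rintro a b hab
      have h1 : Subgroup.zpowers a.1 = Subgroup.zpowers b.1 := by
        have := congrArg (fun P : Sylow 2 G => (P : Subgroup G)) hab
        simpa [Sylow.coe_ofCard] using this
      have ha : a.1 ∈ Subgroup.zpowers b.1 := h1 ▸ Subgroup.mem_zpowers a.1
      have ha1 : a.1 ≠ 1 := by intro h; have := a.2; rw [h, orderOf_one] at this; omega
      rcases hzp b.1 b.2 a.1 ha with h | h
      · exact absurd h ha1
      · exact Subtype.ext h
    · rintro Q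
      obtain ⟨t, ht, hQz⟩ := hPinv Q
      refine ⟨⟨t, ht⟩, ?_⟩
      apply Sylow.ext
      rw [Sylow.coe_ofCard]
      exact hQz.symm
  refine ⟨hsyl, ?_⟩
  -- count elements of order dividing 2
  rw [Nat.card_eq_fintype_card, Fintype.card_subtype]
  have hset : (Finset.univ.filter (fun g : G => g ^ 2 = 1)) =
      insert 1 (Finset.univ.filter (fun g : G => orderOf g = 2)) := by
    ext g
    simp only [Finset.mem_filter, Finset.mem_insert, Finset.mem_univ, true_and]
    constructor
    · intro hg
      by_cases h1 : g = 1
      · exact Or.inl h1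
      · refine Or.inr ?_
        rcases (Nat.dvd_prime Nat.prime_two).mp (orderOf_dvd_of_pow_eq_one hg) with h | h
        · exact absurd (orderOf_eq_one_iff.mp h) h1
        · exact h
    · rintro (rfl | h)
      · simp
      · rw [← h]; exact pow_orderOf_eq_one g
  have hfc : (Finset.univ.filter (fun g : G => orderOf g = 2)).card = n := by
    rw [← Fintype.card_subtype, ← Nat.card_eq_fintype_card]
    exact hinvcount
  rw [hset, Finset.card_insert_of_notMem (by simp), hfc]
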